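/- Let θ ∈ ℝ be irrational and consider the suspension flow φ on (ℂ × ℝ) × AddCircle (1:ℝ) given by φ_t((w, h), s) = ((e^{2πiθt} w, h), s + t) (which preserves the subset S² × S¹ where S² = {(w,h) ∈ ℂ × ℝ : |w|² + h² = 1}). Then for every point ((w, h), s) with w ≠ 0, the ω-limit set ω((w, h), s) equals the torus {((w', h'), s') : |w'| = |w| and h' = h}. -/

import Mathlib

open Filter Topology Set

/-- Step lemma: natural multiples of a positive step come within `g` of `r + M`. -/
lemma exists_step_aux (g r : ℝ) (hg : 0 < g) (N : ℕ) :
    ∃ (m : ℕ) (M : ℤ), N ≤ m ∧ |(m : ℝ) * g - (r + M)| < g := by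
  set M : ℤ := ⌈(N : ℝ) * g - r⌉ with hM
  have hT : (N : ℝ) * g ≤ r + M := by
    have := Int.le_ceil ((N : ℝ) * g - r); rw [← hM] at this; linarith
  set T : ℝ := r + M with hTdef
  have hTN : (N : ℝ) ≤ T / g := (le_div_iff₀ hg).2 (by linarith)
  have hfl : (N : ℤ) ≤ ⌊T / g⌋ := Int.le_floor.2 (by exact_mod_cast hTN)
  have h0 : (0 : ℤ) ≤ ⌊T / g⌋ := le_trans (by positivity) hfl
  refine ⟨⌊T / g⌋.toNat, M, ?_, ?_⟩
  · exact_mod_cast (Int.le_toNat h0).2 hfl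
  · have hc : ((⌊T / g⌋.toNat : ℝ)) = (⌊T / g⌋ : ℝ) := by exact_mod_cast Int.toNat_of_nonneg h0
    have h1 : (⌊T / g⌋ : ℝ) ≤ T / g := Int.floor_le _
    have h2 : T / g < (⌊T / g⌋ : ℝ) + 1 := Int.lt_floor_add_one _
    have h1' : (⌊T / g⌋ : ℝ) * g ≤ T := by
      calc (⌊T / g⌋ : ℝ) * g ≤ (T / g) * g := by nlinarith
      _ = T := by field_simp
    have h2' : T < (⌊T / g⌋ : ℝ) * g + g := by
      have : T = (T / g) * g := by field_simp
      nlinarith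
    rw [hc, abs_lt]; constructor <;> nlinarith

/-- Density of the irrational rotation forward orbit on the circle. -/
lemma irrational_orbit_dense (θ : ℝ) (hθ : Irrational θ) (Y : AddCircle (1 : ℝ))
    (ε : ℝ) (hε : 0 < ε) (N : ℕ) :
    ∃ n : ℕ, N ≤ n ∧ dist (((n : ℝ) * θ : ℝ) : AddCircle (1 : ℝ)) Y < ε := by
  obtain ⟨r, rfl⟩ := QuotientAddGroup.mk_surjective Y
  set ε' : ℝ := min ε (1/2) with hε'def
  have hε'0 : 0 < ε' := lt_min hε (by norm_num)
  have hε'2 : ε' ≤ 1/2 := min_le_right _ _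
  have hε'ε : ε' ≤ ε := min_le_left _ _
  -- the subgroup generated by θ and 1 is dense
  set S : AddSubgroup ℝ := AddSubgroup.closure {θ, 1} with hS
  have hd : Dense (S : Set ℝ) := by
    rcases S.dense_or_cyclic with hd | ⟨a, ha⟩
    · exact hd
    · exfalso
      have hθS : θ ∈ S := AddSubgroup.subset_closure (by simp)
      have h1S : (1 : ℝ) ∈ S := AddSubgroup.subset_closure (by simp)
      rw [ha, AddSubgroup.mem_closure_singleton] at hθS h1S
      obtain ⟨m, hm⟩ := hθS
      obtain ⟨n, hn⟩ := h1S
      have hn0 : (n : ℝ) ≠ 0 := by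
        intro h0
        rw [zsmul_eq_mul, h0, zero_mul] at hn; exact one_ne_zero hn.symm
      refine hθ ⟨(m : ℚ) / (n : ℚ), ?_⟩
      rw [zsmul_eq_mul] at hm hn
      have key : θ * (n : ℝ) = (m : ℝ) := by
        rw [← hm]; linear_combination (m : ℝ) * hn
      push_cast
      rw [div_eq_iff (by exact_mod_cast hn0)]
      linarith [key]
  -- find a small positive element of S
  obtain ⟨g, hgS, hg⟩ := hd.exists_mem_open isOpen_Ioo
    (⟨ε'/2, by constructor <;> [positivity; linarith]⟩ : (Ioo (0:ℝ) ε').Nonempty)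
  obtain ⟨hg0, hgε⟩ := hg
  have hgS' : g ∈ AddSubgroup.closure ({θ, 1} : Set ℝ) := hgS
  rw [AddSubgroup.mem_closure_pair] at hgS'
  obtain ⟨mi, ni, hgrep⟩ := hgS'
  rw [zsmul_eq_mul, zsmul_eq_mul, mul_one] at hgrep
  have hmi : mi ≠ 0 := by
    rintro rfl
    rw [Int.cast_zero, zero_mul, zero_add] at hgrep
    have h1 : (0 : ℝ) < ni := hgrep ▸ hg0
    have h2 : (ni : ℝ) < 1 := lt_of_lt_of_le (hgrep ▸ hgε) (by linarith)
    have : (1 : ℤ) ≤ ni := by exact_mod_cast h1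
    have : (1 : ℝ) ≤ ni := by exact_mod_cast this
    linarith
  set k : ℕ := mi.natAbs with hk
  have hk1 : 1 ≤ k := Nat.one_le_iff_ne_zero.2 (Int.natAbs_ne_zero.2 hmi)
  set d : ℝ := if 0 ≤ mi then g else -g with hd'
  -- (k θ : AddCircle 1) = (d : AddCircle 1)
  have hmem : (k : ℝ) * θ - d ∈ AddSubgroup.zmultiples (1 : ℝ) := by
    rcases le_or_gt 0 mi with hmi0 | hmi0
    · have hkm : (k : ℝ) = (mi : ℝ) := by
        rw [hk, Nat.cast_natAbs, Int.cast_abs, abs_of_nonneg (by exact_mod_cast hmi0 : (0:ℝ) ≤ mi)]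
      refine ⟨-ni, ?_⟩
      show (-ni : ℤ) • (1 : ℝ) = _
      rw [zsmul_eq_mul, mul_one, hd', if_pos hmi0, hkm]; push_cast; linarith
    · have hkm : (k : ℝ) = -(mi : ℝ) := by
        rw [hk, Nat.cast_natAbs, Int.cast_abs, abs_of_neg (by exact_mod_cast hmi0 : (mi:ℝ) < 0)]
      refine ⟨ni, ?_⟩
      show (ni : ℤ) • (1 : ℝ) = _
      rw [zsmul_eq_mul, mul_one, hd', if_neg (not_le.2 hmi0), hkm]; push_cast; linarith
  set r' : ℝ := if 0 ≤ mi then r else -r with hr'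
  obtain ⟨m', M, hm'N, hstep⟩ := exists_step_aux g r' hg0 N
  obtain ⟨M'', hM''⟩ : ∃ M'' : ℤ, |(m' : ℝ) * d - r - M''| < g := by
    rcases le_or_gt 0 mi with h0 | h0
    · refine ⟨M, ?_⟩
      rw [hd', if_pos h0]
      rw [hr', if_pos h0] at hstep
      rw [abs_lt] at hstep ⊢
      push_cast at hstep ⊢
      constructor <;> linarith
    · refine ⟨-M, ?_⟩
      rw [hd', if_neg (not_le.2 h0)]
      rw [hr', if_neg (not_le.2 h0)] at hstep
      rw [abs_lt] at hstep ⊢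
      push_cast at hstep ⊢
      constructor <;> linarith
  refine ⟨m' * k, le_trans hm'N (Nat.le_mul_of_pos_right _ hk1), ?_⟩
  have he1 : ((((m' * k : ℕ) : ℝ) * θ : ℝ) : AddCircle (1:ℝ))
      = (((m' : ℝ) * d : ℝ) : AddCircle (1:ℝ)) := by
    rw [QuotientAddGroup.eq_iff_sub_mem]
    have hmm : ((m' * k : ℕ) : ℝ) * θ - (m' : ℝ) * d = (m' : ℤ) • ((k : ℝ) * θ - d) := by
      rw [zsmul_eq_mul]; push_cast; ring
    rw [hmm]
    exact AddSubgroup.zsmul_mem _ hmem _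
  have he2 : (((m':ℝ) * d : ℝ) : AddCircle (1:ℝ))
      = (((m':ℝ) * d - M'' : ℝ) : AddCircle (1:ℝ)) := by
    rw [QuotientAddGroup.eq_iff_sub_mem]
    refine ⟨M'', ?_⟩
    show (M'' : ℤ) • (1 : ℝ) = _
    rw [zsmul_eq_mul, mul_one]; ring
  rw [he1, he2, dist_eq_norm]
  have he3 : ((((m':ℝ) * d - M'' : ℝ)) : AddCircle (1:ℝ)) - ((r : ℝ) : AddCircle (1:ℝ))
      = (((m':ℝ) * d - M'' - r : ℝ) : AddCircle (1:ℝ)) := by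
    norm_cast
  rw [he3]
  set x : ℝ := (m':ℝ) * d - M'' - r with hx
  have hxlt : |x| < g := by
    rw [hx]
    have : (m':ℝ) * d - (M'' : ℝ) - r = (m':ℝ) * d - r - M'' := by ring
    rw [this]; exact hM''
  have hx2 : |x| < 1/2 := lt_of_lt_of_le hxlt (le_trans (le_of_lt hgε) hε'2)
  have hround : round x = 0 := by
    rw [round_eq_zero_iff]
    rw [abs_lt] at hx2
    exact ⟨by linarith [hx2.1], by linarith [hx2.2]⟩
  have hnorm : ‖((x : ℝ) : AddCircle (1:ℝ))‖ = |x| := by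
    rw [AddCircle.norm_eq]
    simp [hround]
  rw [hnorm]
  exact lt_of_lt_of_le (lt_trans hxlt hgε) hε'ε


/-- The suspension flow on `(ℂ × ℝ) × (ℝ/ℤ)` of the rotation of `S² ⊆ ℂ × ℝ` by angle
`2πθ`: `φ_t((w, h), s) = ((e^{2πiθt} w, h), s + t)`. -/
noncomputable def suspensionFlow (θ : ℝ) (t : ℝ) (p : (ℂ × ℝ) × AddCircle (1 : ℝ)) :
    (ℂ × ℝ) × AddCircle (1 : ℝ) :=
  ((Complex.exp ((2 * Real.pi * θ * t : ℝ) * Complex.I) * p.1.1, p.1.2),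
    p.2 + (t : AddCircle (1 : ℝ)))

lemma natCast_addCircle_eq_zero (n : ℕ) : ((n : ℝ) : AddCircle (1 : ℝ)) = 0 := by
  rw [QuotientAddGroup.eq_zero_iff]
  exact ⟨(n : ℤ), by push_cast [zsmul_eq_mul, mul_one]; ring⟩

/-- for irrational `θ`, the ω-limit set of any point `((w, h), s)` with
`w ≠ 0` under the suspension flow `φ_t((w, h), s) = ((e^{2πiθt} w, h), s + t)` is the
torus `{((w', h'), s') : |w'| = |w|, h' = h}`. -/
theorem suspensionFlow_omegaLimit_torus (θ : ℝ) (hθ : Irrational θ)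
    (w : ℂ) (h : ℝ) (s : AddCircle (1 : ℝ)) (hw : w ≠ 0) :
    omegaLimit Filter.atTop (suspensionFlow θ) {((w, h), s)} =
      {q : (ℂ × ℝ) × AddCircle (1 : ℝ) |
        ‖q.1.1‖ = ‖w‖ ∧ q.1.2 = h} := by
  apply Set.Subset.antisymm
  · -- easy inclusion
    intro q hq
    have h1 := omegaLimit_subset_closure_fw_image Filter.atTop (suspensionFlow θ)
      {((w, h), s)} (univ_mem : Set.univ ∈ (Filter.atTop : Filter ℝ)) hq
    have hC : IsClosed {q : (ℂ × ℝ) × AddCircle (1 : ℝ) |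
        ‖q.1.1‖ = ‖w‖ ∧ q.1.2 = h} := by
      apply IsClosed.inter
      · exact isClosed_eq (continuous_norm.comp
          (continuous_fst.comp continuous_fst)) continuous_const
      · exact isClosed_eq (continuous_snd.comp continuous_fst) continuous_const
    refine closure_minimal ?_ hC h1
    rintro x ⟨t, -, p', hp', rfl⟩
    rw [mem_singleton_iff] at hp'
    subst hp'
    constructor
    · show ‖_ * w‖ = ‖w‖
      rw [norm_mul, Complex.norm_exp_ofReal_mul_I, one_mul]
    · rfl
  · -- hard inclusion
    intro q hq
    obtain ⟨hq1, hq2⟩ := hq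
    have hw' : q.1.1 ≠ 0 := by
      intro h0
      rw [h0, norm_zero] at hq1
      exact hw (norm_eq_zero.mp hq1.symm)
    obtain ⟨τ, hτ⟩ := QuotientAddGroup.mk_surjective (q.2 - s)
    set y₀ : AddCircle (1:ℝ) := ((Complex.arg (q.1.1/w) / (2*Real.pi) : ℝ) : AddCircle (1:ℝ))
      with hy₀
    set Y : AddCircle (1:ℝ) := y₀ - ((θ*τ : ℝ) : AddCircle (1:ℝ)) with hY
    have hsel : ∀ j : ℕ, ∃ n : ℕ, j ≤ n ∧
        dist (((n:ℝ)*θ : ℝ) : AddCircle (1:ℝ)) Y < 1/(j+1) :=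
      fun j => irrational_orbit_dense θ hθ Y (1/(j+1)) (by positivity) j
    choose n hn1 hn2 using hsel
    set t : ℕ → ℝ := fun j => (n j : ℝ) + τ with ht
    have htend : Tendsto t atTop atTop := by
      apply tendsto_atTop_mono (fun j => ?_)
        (tendsto_atTop_add_const_right _ τ tendsto_natCast_atTop_atTop)
      exact add_le_add_left (by exact_mod_cast hn1 j : (j:ℝ) ≤ n j) τ
    have hang : Tendsto (fun j => ((θ * t j : ℝ) : AddCircle (1:ℝ))) atTop (𝓝 y₀) := by
      rw [tendsto_iff_dist_tendsto_zero]
      apply squeeze_zero (fun j => dist_nonneg) (fun j => ?_)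
        tendsto_one_div_add_atTop_nhds_zero_nat
      have e1 : ((θ * t j : ℝ) : AddCircle (1:ℝ))
          = (((n j : ℝ) * θ : ℝ) : AddCircle (1:ℝ)) + ((θ*τ : ℝ) : AddCircle (1:ℝ)) := by
        rw [← QuotientAddGroup.mk_add]
        congr 1; rw [ht]; ring
      have e2 : y₀ = Y + ((θ*τ:ℝ) : AddCircle (1:ℝ)) := by rw [hY]; abel
      rw [e1, e2, dist_add_right]
      exact le_of_lt (hn2 j)
    set F : AddCircle (1:ℝ) → (ℂ × ℝ) × AddCircle (1:ℝ) :=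
      fun x => (((AddCircle.toCircle x : ℂ) * w, h), q.2) with hF
    have hcont : Continuous F := by
      apply Continuous.prodMk _ continuous_const
      apply Continuous.prodMk _ continuous_const
      exact (continuous_subtype_val.comp AddCircle.continuous_toCircle).mul continuous_const
    have hkey : ∀ j, suspensionFlow θ (t j) ((w, h), s) = F ((θ * t j : ℝ) : AddCircle (1:ℝ)) := by
      intro j
      unfold suspensionFlow
      refine Prod.ext (Prod.ext ?_ rfl) ?_
      · show Complex.exp _ * w = _
        rw [hF]
        show _ = (AddCircle.toCircle ((θ * t j : ℝ) : AddCircle (1:ℝ)) : ℂ) * w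
        rw [AddCircle.toCircle_apply_mk, Circle.coe_exp]
        congr 2
        push_cast
        ring
      · show s + ((t j : ℝ) : AddCircle (1:ℝ)) = q.2
        have e3 : ((t j : ℝ) : AddCircle (1:ℝ))
            = ((n j : ℝ) : AddCircle (1:ℝ)) + ((τ : ℝ) : AddCircle (1:ℝ)) := by
          rw [← QuotientAddGroup.mk_add]
        rw [e3, natCast_addCircle_eq_zero, zero_add, hτ]
        abel
    have hFy : F y₀ = q := by
      have habs : ‖q.1.1/w‖ = 1 := by
        rw [norm_div, hq1, div_self (norm_ne_zero_iff.mpr hw)]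
      have htc : (AddCircle.toCircle y₀ : ℂ) = q.1.1/w := by
        rw [hy₀, AddCircle.toCircle_apply_mk, Circle.coe_exp]
        have h2π : (2*Real.pi) ≠ 0 := by positivity
        have e4 : 2 * Real.pi / 1 * (Complex.arg (q.1.1/w) / (2*Real.pi))
            = Complex.arg (q.1.1/w) := by field_simp
        rw [e4]
        conv_rhs => rw [← Complex.norm_mul_exp_arg_mul_I (q.1.1/w)]
        rw [habs, Complex.ofReal_one, one_mul]
      rw [hF]
      show ((_ * w, h), q.2) = q
      rw [htc, div_mul_cancel₀ _ hw, ← hq2]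
    rw [mem_omegaLimit_singleton_iff_map_cluster_point]
    apply MapClusterPt.of_comp htend
    apply Filter.Tendsto.mapClusterPt
    show Tendsto (fun j => suspensionFlow θ (t j) ((w, h), s)) atTop (𝓝 q)
    have e5 : (fun j => suspensionFlow θ (t j) ((w, h), s))
        = F ∘ (fun j => ((θ * t j : ℝ) : AddCircle (1:ℝ))) := funext hkey
    rw [e5, ← hFy]
    exact (hcont.tendsto y₀).comp hang
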